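/- Let A=(S,R) be a finite argumentation network and let h be an assignment of G3 truth values to the atoms S such that t ⊨_h φ for every formula φ in the theory Δ_A. Then the labelling λ_h (defined by λ_h(x)=in if h(x)=(⊤,⊤), out if h(x)=(⊥,⊥), und if h(x)=(⊥,⊤)) is a complete extension of A. -/

import Mathlib

/-- The three Caminada labels. -/
inductive Label where
  | in_ : Label
  | out : Label
  | und : Label
deriving DecidableEq

/-- Propositional intuitionistic formulas over atoms `α`, with the
distinguished constant `nconst` (the paper's `n`). -/
inductive Form (α : Type) where
  | atom : α → Form α
  | nconst : Form α
  | top : Form α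
  | bot : Form α
  | and : Form α → Form α → Form α
  | or : Form α → Form α → Form α
  | imp : Form α → Form α → Form α
  | neg : Form α → Form α

/-- Forcing in the two-world Kripke model: world `false` is `t`, world `true`
is `s`, with `t < s` (i.e. the Bool order). `h` assigns to each atom its pair
of truth values (at `t`, at `s`). The constant `n` has value `(⊥,⊤)`. -/
def force {α : Type} (h : α → Bool × Bool) : Bool → Form α → Prop
  | w, .atom x => (if w then (h x).2 else (h x).1) = true
  | w, .nconst => w = true
  | _, .top => True
  | _, .bot => False
  | w, .and A B => force h w A ∧ force h w B
  | w, .or A B => force h w A ∨ force h w B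
  | w, .imp A B => ∀ v : Bool, w ≤ v → force h v A → force h v B
  | w, .neg A => ∀ v : Bool, w ≤ v → ¬ force h v A

/-- An assignment is legitimate when no atom gets the forbidden value `(⊤,⊥)`. -/
def Persistent {α : Type} (h : α → Bool × Bool) : Prop :=
  ∀ x, (h x).1 = true → (h x).2 = true

def bigAnd {α : Type} : List (Form α) → Form α
  | [] => .top
  | f :: fs => .and f (bigAnd fs)

def bigOr {α : Type} : List (Form α) → Form α
  | [] => .bot
  | f :: fs => .or f (bigOr fs)

/-- The list of attackers of `x` in the network `(α, R)`. -/
noncomputable def attackers {α : Type} [Fintype α] (R : α → α → Prop) [DecidableRel R] (x : α) : List α :=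
  (Finset.univ.filter (fun y => R y x)).toList

/-- (a1)  `x → (n ∨ ⋀_{yRx} ¬y)` -/
noncomputable def fa1 {α : Type} [Fintype α] (R : α → α → Prop) [DecidableRel R] (x : α) : Form α :=
  .imp (.atom x) (.or .nconst (bigAnd ((attackers R x).map (fun y => .neg (.atom y)))))

/-- (a2)  `(⋀_{yRx} ¬y) → (n ∨ x)` -/
noncomputable def fa2 {α : Type} [Fintype α] (R : α → α → Prop) [DecidableRel R] (x : α) : Form α :=
  .imp (bigAnd ((attackers R x).map (fun y => .neg (.atom y)))) (.or .nconst (.atom x))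

/-- (b1)  `¬x → (n ∨ ⋁_{yRx} y)` -/
noncomputable def fb1 {α : Type} [Fintype α] (R : α → α → Prop) [DecidableRel R] (x : α) : Form α :=
  .imp (.neg (.atom x)) (.or .nconst (bigOr ((attackers R x).map (fun y => .atom y))))

/-- (b2)  `(⋁_{yRx} y) → (¬x ∨ n)` -/
noncomputable def fb2 {α : Type} [Fintype α] (R : α → α → Prop) [DecidableRel R] (x : α) : Form α :=
  .imp (bigOr ((attackers R x).map (fun y => .atom y))) (.or (.neg (.atom x)) .nconst)

/-- `h` is a model of the theory `Δ_A`: every formula of `Δ_A` holds at `t`. -/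
def ModelsDelta {α : Type} [Fintype α] (h : α → Bool × Bool)
    (R : α → α → Prop) [DecidableRel R] : Prop :=
  ∀ x, force h false (fa1 R x) ∧ force h false (fa2 R x) ∧
    force h false (fb1 R x) ∧ force h false (fb2 R x)

/-- Caminada labelling / complete extension of the network `(α, R)`. -/
def IsCompleteExt {α : Type} (R : α → α → Prop) (l : α → Label) : Prop :=
  (∀ x, l x = .in_ ↔ ∀ y, R y x → l y = .out) ∧
  (∀ x, l x = .out ↔ ∃ y, R y x ∧ l y = .in_) ∧
  (∀ x, l x = .und ↔ ((∀ y, R y x → l y ≠ .in_) ∧ ∃ y, R y x ∧ l y = .und))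

/-- The labelling `λ_h` induced by an assignment `h`. -/
def lamOf {α : Type} (h : α → Bool × Bool) (x : α) : Label :=
  if h x = (true, true) then .in_ else if h x = (false, false) then .out else .und

/-- The assignment `h_λ` induced by a labelling `λ`. -/
def assignOf {α : Type} (l : α → Label) (x : α) : Bool × Bool :=
  match l x with
  | .in_ => (true, true)
  | .out => (false, false)
  | .und => (false, true)


section Aux
variable {α : Type} [Fintype α] (R : α → α → Prop) [DecidableRel R] (h : α → Bool × Bool)

lemma mem_attackers {x y : α} : y ∈ attackers R x ↔ R y x := by
  simp [attackers]

lemma force_bigAnd (w : Bool) (L : List (Form α)) :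
    force h w (bigAnd L) ↔ ∀ f ∈ L, force h w f := by
  induction L with
  | nil => simp [bigAnd, force]
  | cons a t ih => simp only [bigAnd, force, ih, List.mem_cons]; aesop

lemma force_bigOr (w : Bool) (L : List (Form α)) :
    force h w (bigOr L) ↔ ∃ f ∈ L, force h w f := by
  induction L with
  | nil => simp [bigOr, force]
  | cons a t ih => simp only [bigOr, force, ih, List.mem_cons]; aesop

end Aux

/-- If `h` is a model of `Δ_A` (every formula of `Δ_A` holds at the actual
world `t`), then the labelling `λ_h` is a complete extension of `A = (S,R)`. -/
theorem stmt0 {α : Type} [Fintype α] [Nonempty α] (R : α → α → Prop) [DecidableRel R]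
    (h : α → Bool × Bool) (hp : Persistent h) (hm : ModelsDelta h R) :
    IsCompleteExt R (lamOf h) := by
  classical
  have hval : ∀ x, h x = (true, true) ∨ h x = (false, false) ∨ h x = (false, true) := by
    intro x
    have hpx := hp x
    rcases hxy : h x with ⟨a, b⟩
    rw [hxy] at hpx
    cases a <;> cases b <;> simp_all
  -- A1: x true at t implies every attacker is out
  have A1 : ∀ x, (h x).1 = true → ∀ y, R y x → h y = (false, false) := by
    intro x hx y hy
    have H := (hm x).1
    simp only [fa1, force] at H
    have H2 := H false (le_refl _) (by simpa [force] using hx)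
    rcases H2 with H2 | H2
    · simp [force] at H2
    · rw [force_bigAnd] at H2
      have H3 := H2 _ (List.mem_map_of_mem ((mem_attackers R).mpr hy))
      have hy1 : ¬ force h false (Form.atom y) := H3 false (le_refl _)
      have hy2 : ¬ force h true (Form.atom y) := H3 true (by simp)
      simp only [force] at hy1 hy2
      simp only [if_neg Bool.false_ne_true, if_pos rfl] at hy1 hy2
      have := hval y
      rcases hxy : h y with ⟨a, b⟩
      rw [hxy] at hy1 hy2
      simp at hy1 hy2
      simp [hy1, hy2]
  -- A2: all attackers out implies x true at t
  have A2 : ∀ x, (∀ y, R y x → h y = (false, false)) → (h x).1 = true := by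
    intro x hx
    have H := (hm x).2.1
    simp only [fa2, force] at H
    have hA : force h false (bigAnd ((attackers R x).map (fun y => Form.neg (Form.atom y)))) := by
      rw [force_bigAnd]
      intro f hf
      rcases List.mem_map.mp hf with ⟨y, hy, rfl⟩
      have hyR := (mem_attackers R).mp hy
      have hout := hx y hyR
      intro v _ hv
      simp only [force, hout] at hv
      cases v <;> simp_all
    have H2 := H false (le_refl _) hA
    rcases H2 with H2 | H2
    · simp [force] at H2
    · simpa [force] using H2
  -- B1: x out implies some attacker is in (true at t)
  have B1 : ∀ x, h x = (false, false) → ∃ y, R y x ∧ (h y).1 = true := by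
    intro x hx
    have H := (hm x).2.2.1
    simp only [fb1, force] at H
    have hneg : force h false (Form.neg (Form.atom x)) := by
      intro v _ hv
      simp only [force, hx] at hv
      cases v <;> simp_all
    have H2 := H false (le_refl _) hneg
    rcases H2 with H2 | H2
    · simp [force] at H2
    · rw [force_bigOr] at H2
      rcases H2 with ⟨f, hf, hff⟩
      rcases List.mem_map.mp hf with ⟨y, hy, rfl⟩
      exact ⟨y, (mem_attackers R).mp hy, by simpa [force] using hff⟩
  -- B2: some attacker in implies x out
  have B2 : ∀ x, (∃ y, R y x ∧ (h y).1 = true) → h x = (false, false) := by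
    intro x ⟨y, hyR, hy1⟩
    have H := (hm x).2.2.2
    simp only [fb2, force] at H
    have hor : force h false (bigOr ((attackers R x).map (fun y => Form.atom y))) := by
      rw [force_bigOr]
      exact ⟨Form.atom y, List.mem_map_of_mem ((mem_attackers R).mpr hyR),
        by simpa [force] using hy1⟩
    have H2 := H false (le_refl _) hor
    rcases H2 with H2 | H2
    · have h1 : ¬ force h false (Form.atom x) := H2 false (le_refl _)
      have h2 : ¬ force h true (Form.atom x) := H2 true (by simp)
      simp only [force] at h1 h2
      rcases hxy : h x with ⟨a, b⟩
      rw [hxy] at h1 h2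
      simp at h1 h2
      simp [h1, h2]
    · simp [force] at H2
  -- now the three conditions
  have lam_in : ∀ x, lamOf h x = Label.in_ ↔ h x = (true, true) := by
    intro x
    rcases hval x with hx | hx | hx <;> simp [lamOf, hx]
  have lam_out : ∀ x, lamOf h x = Label.out ↔ h x = (false, false) := by
    intro x
    rcases hval x with hx | hx | hx <;> simp [lamOf, hx]
  have lam_und : ∀ x, lamOf h x = Label.und ↔ h x = (false, true) := by
    intro x
    rcases hval x with hx | hx | hx <;> simp [lamOf, hx]
  refine ⟨fun x => ?_, fun x => ?_, fun x => ?_⟩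
  · rw [lam_in]
    constructor
    · intro hx y hy
      rw [lam_out]
      exact A1 x (by rw [hx]) y hy
    · intro hall
      have h1 := A2 x (fun y hy => (lam_out y).mp (hall y hy))
      have h2 := hp x h1
      rcases hxy : h x with ⟨a, b⟩
      rw [hxy] at h1 h2
      simp_all
  · rw [lam_out]
    constructor
    · intro hx
      rcases B1 x hx with ⟨y, hyR, hy1⟩
      refine ⟨y, hyR, (lam_in y).mpr ?_⟩
      have := hp y hy1
      rcases hxy : h y with ⟨a, b⟩
      rw [hxy] at hy1 this
      simp_all
    · intro ⟨y, hyR, hy⟩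
      exact B2 x ⟨y, hyR, by rw [(lam_in y).mp hy]⟩
  · rw [lam_und]
    constructor
    · intro hx
      constructor
      · intro y hyR hyin
        have := B2 x ⟨y, hyR, by rw [(lam_in y).mp hyin]⟩
        rw [hx] at this
        simp at this
      · by_contra hc
        push_neg at hc
        have hnu := hc
        have hall : ∀ y, R y x → h y = (false, false) := by
          intro y hy
          rcases hval y with hv | hv | hv
          · exact absurd ((lam_in y).mpr hv) (by
              intro hin
              exact absurd (B2 x ⟨y, hy, by rw [hv]⟩) (by rw [hx]; simp))
          · exact hv
          · exact absurd ((lam_und y).mpr hv) (hnu y hy)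
        have := A2 x hall
        rw [hx] at this
        simp at this
    · intro ⟨hni, y, hyR, hyu⟩
      rcases hval x with hx | hx | hx
      · have := A1 x (by rw [hx]) y hyR
        rw [(lam_und y).mp hyu] at this
        simp at this
      · rcases B1 x hx with ⟨z, hzR, hz1⟩
        exfalso
        apply hni z hzR
        rw [lam_in]
        have := hp z hz1
        rcases hxy : h z with ⟨a, b⟩
        rw [hxy] at hz1 this
        simp_all
      · exact hx
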